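/- arXiv:1903.00267 — 2 statements merged into one kernel-verified Lean document; each statement's English description precedes it below -/
import Mathlib

section
/- If $f$ is continuous on $[a,b]$, then the generalised fractional integral ${}^A I_{a+}^{\alpha,\beta} f$ is continuous on the open interval $(a,b)$. -/
open MeasureTheory Set Topology Filter

/-- The generalised fractional integral with analytic kernel `A`. -/
noncomputable def genInt (a : ℝ) (α β : ℂ) (A : ℂ → ℂ) (f : ℝ → ℂ) (t : ℝ) : ℂ :=
  ∫ τ in a..t, (((t - τ : ℝ) : ℂ) ^ (α - 1)) * A (((t - τ : ℝ) : ℂ) ^ β) * f τ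

/-- If `f` is continuous on `[a,b]`, then `ᴬI_{a+}^{α,β} f` is continuous on `(a,b)`. -/
theorem genInt_continuousOn (a b : ℝ) (hab : a < b) (α β : ℂ)
    (hα : 0 < α.re) (hβ : 0 ≤ β.re) (R : ℝ) (hR : (b - a) ^ β.re < R)
    (A : ℂ → ℂ) (hA : AnalyticOn ℂ A (Metric.ball 0 R))
    (f : ℝ → ℂ) (hf : ContinuousOn f (Set.Icc a b)) :
    ContinuousOn (genInt a α β A f) (Set.Ioo a b) := by
  -- bounds on `f` and `A`
  obtain ⟨Mf, hMf⟩ : ∃ M, ∀ x ∈ Icc a b, ‖f x‖ ≤ M :=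
    isCompact_Icc.exists_bound_of_continuousOn hf
  have hMf0 : 0 ≤ Mf := le_trans (norm_nonneg _) (hMf a ⟨le_refl a, hab.le⟩)
  set r₀ : ℝ := (b - a) ^ β.re with hr₀def
  have hr₀0 : 0 ≤ r₀ := Real.rpow_nonneg (by linarith) _
  obtain ⟨MA, hMA⟩ : ∃ M, ∀ z ∈ Metric.closedBall (0 : ℂ) r₀, ‖A z‖ ≤ M :=
    (isCompact_closedBall 0 r₀).exists_bound_of_continuousOn
      (hA.continuousOn.mono (Metric.closedBall_subset_ball hR))
  have hMA0 : 0 ≤ MA :=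
    le_trans (norm_nonneg _) (hMA 0 (Metric.mem_closedBall_self hr₀0))
  -- the substituted integrand
  set F : ℝ → ℝ → ℂ := fun t s =>
    (((t - a) * (1 - s) : ℝ) : ℂ) ^ (α - 1) * A ((((t - a) * (1 - s) : ℝ) : ℂ) ^ β)
      * f (a + s * (t - a)) with hFdef
  -- joint continuity of `F` away from the singularity
  have hFC : ∀ t s : ℝ, a < t → t < b → 0 < s → s < 1 →
      ContinuousAt (fun p : ℝ × ℝ => F p.1 p.2) (t, s) := by
    intro t s hat htb h0s hs1
    have hx : (0 : ℝ) < (t - a) * (1 - s) := by nlinarith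
    have hxc : ContinuousAt (fun p : ℝ × ℝ => (((p.1 - a) * (1 - p.2) : ℝ) : ℂ)) (t, s) := by
      exact (Complex.continuous_ofReal.comp
        (((continuous_fst.sub continuous_const)).mul
          (continuous_const.sub continuous_snd))).continuousAt
    have hslit : ((((t - a) * (1 - s) : ℝ)) : ℂ) ∈ Complex.slitPlane := by
      refine Or.inl ?_
      simpa using hx
    have h1 : ContinuousAt (fun p : ℝ × ℝ =>
        (((p.1 - a) * (1 - p.2) : ℝ) : ℂ) ^ (α - 1)) (t, s) :=
      hxc.cpow continuousAt_const hslit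
    have hxr₀ : ‖(((t - a) * (1 - s) : ℝ) : ℂ) ^ β‖ ≤ r₀ := by
      rw [Complex.norm_cpow_eq_rpow_re_of_pos hx]
      exact Real.rpow_le_rpow hx.le (by nlinarith) hβ
    have h2 : ContinuousAt (fun p : ℝ × ℝ =>
        A ((((p.1 - a) * (1 - p.2) : ℝ) : ℂ) ^ β)) (t, s) := by
      refine ContinuousAt.comp ?_ (hxc.cpow continuousAt_const hslit)
      refine hA.continuousOn.continuousAt (Metric.isOpen_ball.mem_nhds ?_)
      simpa [Metric.mem_ball, Complex.dist_eq] using lt_of_le_of_lt hxr₀ hR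
    have hpmem : a + s * (t - a) ∈ Ioo a b := by
      constructor <;> nlinarith
    have h3 : ContinuousAt (fun p : ℝ × ℝ => f (a + p.2 * (p.1 - a))) (t, s) := by
      refine ContinuousAt.comp ?_
        ((continuous_const.add (continuous_snd.mul
          (continuous_fst.sub continuous_const))).continuousAt)
      exact hf.continuousAt (mem_nhds_iff.mpr ⟨Ioo a b, Ioo_subset_Icc_self, isOpen_Ioo, hpmem⟩)
    exact (h1.mul h2).mul h3
  -- a.e. statement : almost every point of `Ι 0 1` lies in `Ioo 0 1`
  have hae : ∀ᵐ s : ℝ, s ∈ Set.uIoc (0 : ℝ) 1 → s ∈ Ioo (0 : ℝ) 1 := by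
    have h1 : ∀ᵐ s : ℝ, s ≠ (1 : ℝ) := by
      have : (volume : Measure ℝ) {(1 : ℝ)} = 0 := measure_singleton 1
      filter_upwards [compl_mem_ae_iff.mpr this] with s hs
      simpa using hs
    filter_upwards [h1] with s hs hmem
    rw [Set.uIoc_of_le (by norm_num : (0:ℝ) ≤ 1)] at hmem
    exact ⟨hmem.1, lt_of_le_of_ne hmem.2 hs⟩
  -- continuity of the parametric integral
  have hG : ∀ t₀ ∈ Ioo a b, ContinuousAt (fun t => ∫ s in (0 : ℝ)..1, F t s) t₀ := by
    rintro t₀ ⟨hat₀, ht₀b⟩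
    set t₁ : ℝ := (a + t₀) / 2 with ht₁
    set t₂ : ℝ := (t₀ + b) / 2 with ht₂
    have hat₁ : a < t₁ := by rw [ht₁]; linarith
    have ht₁t₀ : t₁ < t₀ := by rw [ht₁]; linarith
    have ht₀t₂ : t₀ < t₂ := by rw [ht₂]; linarith
    have ht₂b : t₂ < b := by rw [ht₂]; linarith
    have hnb : Icc t₁ t₂ ∈ 𝓝 t₀ := Icc_mem_nhds ht₁t₀ ht₀t₂
    set C₁ : ℝ := max ((t₁ - a) ^ (α.re - 1)) ((t₂ - a) ^ (α.re - 1)) with hC₁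
    have hC₁0 : 0 ≤ C₁ := le_trans (Real.rpow_nonneg (by linarith) _) (le_max_left _ _)
    have hCb : ∀ t ∈ Icc t₁ t₂, (t - a) ^ (α.re - 1) ≤ C₁ := by
      intro t ht
      rcases le_or_gt 0 (α.re - 1) with he | he
      · exact le_trans (Real.rpow_le_rpow (by linarith [ht.1]) (by linarith [ht.2]) he)
          (le_max_right _ _)
      · exact le_trans (Real.rpow_le_rpow_of_nonpos (by linarith) (by linarith [ht.1]) he.le)
          (le_max_left _ _)
    -- the uniform bound
    have hbd : ∀ t ∈ Icc t₁ t₂, ∀ s ∈ Ioo (0:ℝ) 1,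
        ‖F t s‖ ≤ C₁ * MA * Mf * (1 - s) ^ (α.re - 1) := by
      intro t ht s hs
      have hta : 0 < t - a := by linarith [ht.1]
      have h1s : 0 < 1 - s := by linarith [hs.2]
      have hx : 0 < (t - a) * (1 - s) := mul_pos hta h1s
      have e1 : ‖(((t - a) * (1 - s) : ℝ) : ℂ) ^ (α - 1)‖
          = (t - a) ^ (α.re - 1) * (1 - s) ^ (α.re - 1) := by
        rw [Complex.norm_cpow_eq_rpow_re_of_pos hx,
          Real.mul_rpow hta.le h1s.le]
        norm_num
      have e2 : ‖A ((((t - a) * (1 - s) : ℝ) : ℂ) ^ β)‖ ≤ MA := by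
        apply hMA
        rw [Metric.mem_closedBall, dist_zero_right,
          Complex.norm_cpow_eq_rpow_re_of_pos hx]
        exact Real.rpow_le_rpow hx.le (by nlinarith [ht.2, hs.1, hs.2]) hβ
      have e3 : ‖f (a + s * (t - a))‖ ≤ Mf := by
        apply hMf
        constructor
        · nlinarith [hs.1]
        · nlinarith [hs.2, ht.2]
      calc ‖F t s‖ = ‖(((t - a) * (1 - s) : ℝ) : ℂ) ^ (α - 1)‖
            * ‖A ((((t - a) * (1 - s) : ℝ) : ℂ) ^ β)‖ * ‖f (a + s * (t - a))‖ := by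
              simp [hFdef, norm_mul]
        _ ≤ ((t - a) ^ (α.re - 1) * (1 - s) ^ (α.re - 1)) * MA * Mf := by
              rw [e1]
              exact mul_le_mul (mul_le_mul_of_nonneg_left e2 (by positivity)) e3
                (norm_nonneg _) (by positivity)
        _ ≤ (C₁ * (1 - s) ^ (α.re - 1)) * MA * Mf := by
              have := hCb t ht
              gcongr
        _ = C₁ * MA * Mf * (1 - s) ^ (α.re - 1) := by ring
    refine intervalIntegral.continuousAt_of_dominated_interval
      (bound := fun s => C₁ * MA * Mf * (1 - s) ^ (α.re - 1)) ?_ ?_ ?_ ?_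
    · -- measurability
      filter_upwards [Ioo_mem_nhds hat₀ ht₀b] with t ht
      have hcont : ContinuousOn (F t) (Ioo (0:ℝ) 1) := by
        intro s hs
        exact ((hFC t s ht.1 ht.2 hs.1 hs.2).comp
          ((continuous_const.prodMk continuous_id).continuousAt)).continuousWithinAt
      have h1 : AEStronglyMeasurable (F t) (volume.restrict (Ioo (0:ℝ) 1)) :=
        hcont.aestronglyMeasurable measurableSet_Ioo
      rw [Set.uIoc_of_le (by norm_num : (0:ℝ) ≤ 1),
        ← Measure.restrict_congr_set Ioo_ae_eq_Ioc]
      exact h1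
    · -- bound
      filter_upwards [hnb] with t ht
      filter_upwards [hae] with s hs hmem
      exact hbd t ht s (hs hmem)
    · -- integrability of the bound
      apply IntervalIntegrable.const_mul
      have h := (intervalIntegral.intervalIntegrable_rpow'
        (a := 0) (b := 1) (r := α.re - 1) (by linarith)).comp_sub_left 1
      simpa using h.symm
    · -- a.e. continuity in the parameter
      filter_upwards [hae] with s hs hmem
      have hs' := hs hmem
      have hg : ContinuousAt (fun t : ℝ => (t, s)) t₀ :=
        (Continuous.prodMk continuous_id continuous_const).continuousAt
      exact ContinuousAt.comp (f := fun t : ℝ => (t, s))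
        (g := fun p : ℝ × ℝ => F p.1 p.2) (hFC t₀ s hat₀ ht₀b hs'.1 hs'.2) hg
  -- identification of `genInt` with the substituted integral
  have key : ∀ t ∈ Ioo a b, genInt a α β A f t = (t - a) • ∫ s in (0 : ℝ)..1, F t s := by
    rintro t ⟨hat, htb⟩
    have hc : t - a ≠ 0 := ne_of_gt (by linarith)
    have hrepr : (fun s => F t s)
        = fun s => (((t - ((t - a) * s + a) : ℝ) : ℂ) ^ (α - 1))
          * A (((t - ((t - a) * s + a) : ℝ) : ℂ) ^ β) * f ((t - a) * s + a) := by
      funext s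
      have h1 : (t - ((t - a) * s + a)) = (t - a) * (1 - s) := by ring
      have h2 : ((t - a) * s + a) = a + s * (t - a) := by ring
      rw [h1, h2]
    have := intervalIntegral.integral_comp_mul_add (a := 0) (b := 1)
      (fun τ => (((t - τ : ℝ) : ℂ) ^ (α - 1)) * A (((t - τ : ℝ) : ℂ) ^ β) * f τ) hc a
    simp only [mul_zero, zero_add, mul_one, sub_add_cancel] at this
    rw [genInt, hrepr, this, smul_smul, mul_inv_cancel₀ hc, one_smul]
  refine ContinuousOn.congr ?_ key
  exact fun t ht => ((continuousAt_id.sub continuousAt_const).smul (hG t ht)).continuousWithinAt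
end

section
/- Existence and uniqueness for the Volterra equation: under the Lipschitz assumption $|f(x,y_1)-f(x,y_2)| \le C|y_1-y_2|$ and with $u_0(t) = \sum_{k=1}^n \frac{C_k (t-a)^{\gamma - k}}{\Gamma(\gamma - k + 1)} \in L^1[a,b]$, the Volterra integral equation $u(t) = u_0(t) + {}^A I_{a+}^{\alpha+\gamma,\beta} f(t, u(t))$ has a unique solution $u \in L^1[a,b]$. -/
open MeasureTheory Set

open scoped ENNReal NNReal

set_option maxHeartbeats 1000000 in
/-- Existence and uniqueness for the Volterra integral equation
`u(t) = ∑_{k=1}^n C_k (t-a)^{γ-k}/Γ(γ-k+1) + ᴬI_{a+}^{α+γ,β} f(t, u(t))`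
under a Lipschitz assumption on `f` in the second variable: there is a solution
`u ∈ L¹[a,b]`, unique up to almost-everywhere equality. -/
theorem volterra_existence_uniqueness (a b : ℝ) (hab : a < b)
    (α γ β : ℂ) (hα : 0 < α.re) (hγ : 0 < γ.re) (hβ : 0 ≤ β.re)
    (R : ℝ) (hR : (b - a) ^ β.re < R)
    (A : ℂ → ℂ) (hA : AnalyticOn ℂ A (Metric.ball 0 R))
    (n : ℕ) (hn : n = ⌈γ.re⌉₊) (Ck : ℕ → ℂ)
    (u₀ : ℝ → ℂ)
    (hu₀def : ∀ t : ℝ, u₀ t =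
      ∑ k ∈ Finset.Icc 1 n,
        Ck k * ((t - a : ℝ) : ℂ) ^ (γ - k) / Complex.Gamma (γ - k + 1))
    (hu₀L1 : IntegrableOn u₀ (Set.Icc a b))
    (C : ℝ) (hC : 0 ≤ C)
    (f : ℝ → ℂ → ℂ)
    (hLip : ∀ x : ℝ, ∀ y₁ y₂ : ℂ, ‖f x y₁ - f x y₂‖ ≤ C * ‖y₁ - y₂‖)
    (hmeas : ∀ u : ℝ → ℂ, IntegrableOn u (Set.Icc a b) →
      IntegrableOn (fun s => f s (u s)) (Set.Icc a b)) :
    ∃ u : ℝ → ℂ, IntegrableOn u (Set.Icc a b) ∧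
      (∀ᵐ t ∂(volume.restrict (Set.Icc a b)),
        u t = u₀ t + genInt a (α + γ) β A (fun s => f s (u s)) t) ∧
      ∀ v : ℝ → ℂ, IntegrableOn v (Set.Icc a b) →
        (∀ᵐ t ∂(volume.restrict (Set.Icc a b)),
          v t = u₀ t + genInt a (α + γ) β A (fun s => f s (v s)) t) →
        (∀ᵐ t ∂(volume.restrict (Set.Icc a b)), v t = u t) := by
  classical
  have hd : 0 < b - a := sub_pos.mpr hab
  set μ : Measure ℝ := volume.restrict (Set.Icc a b) with hμdef
  set σ : ℝ := (α + γ).re with hσdef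
  have hσ : 0 < σ := by
    rw [hσdef, Complex.add_re]; linarith
  set d : ℝ := b - a with hddef
  have hr0 : (0:ℝ) < d ^ β.re := Real.rpow_pos_of_pos hd _
  -- bound for A on the relevant compact set
  obtain ⟨M, hM⟩ := (isCompact_closedBall (0:ℂ) (d ^ β.re)).exists_bound_of_continuousOn
    (hA.continuousOn.mono (Metric.closedBall_subset_ball hR))
  have hM0 : 0 ≤ M := (norm_nonneg _).trans (hM 0 (Metric.mem_closedBall_self hr0.le))
  have hmemball : ∀ x : ℝ, x ∈ Set.Ioc (0:ℝ) d → ((x:ℂ) ^ β) ∈ Metric.closedBall (0:ℂ) (d ^ β.re) := by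
    intro x hx
    rw [Metric.mem_closedBall, dist_zero_right,
      Complex.norm_cpow_eq_rpow_re_of_pos hx.1]
    exact Real.rpow_le_rpow hx.1.le hx.2 hβ
  -- the kernel
  set K : ℝ → ℂ := (Set.Ioc (0:ℝ) d).indicator
      (fun x => ((x:ℂ) ^ (α + γ - 1)) * A ((x:ℂ) ^ β)) with hKdef
  have hcpow_cont : ∀ c : ℂ, ContinuousOn (fun x : ℝ => (x:ℂ) ^ c) (Set.Ioc (0:ℝ) d) := by
    intro c x hx
    exact ((continuousAt_cpow_const (Complex.ofReal_mem_slitPlane.mpr hx.1)).comp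
      Complex.continuous_ofReal.continuousAt).continuousWithinAt
  have hKmeas : Measurable K := by
    rw [hKdef, ← Set.piecewise_eq_indicator]
    apply ContinuousOn.measurable_piecewise _ continuousOn_const measurableSet_Ioc
    apply (hcpow_cont (α + γ - 1)).mul
    exact (hA.continuousOn.mono (Metric.closedBall_subset_ball hR)).comp (hcpow_cont β) hmemball
  have hKzero : ∀ x : ℝ, x ∉ Set.Ioc (0:ℝ) d → K x = 0 := by
    intro x hx; rw [hKdef]; exact Set.indicator_of_notMem hx _
  have hKb : ∀ x : ℝ, (‖K x‖₊ : ℝ≥0∞) ≤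
      (Set.Ioc (0:ℝ) d).indicator (fun x => ENNReal.ofReal (M * x ^ (σ - 1))) x := by
    intro x
    by_cases hx : x ∈ Set.Ioc (0:ℝ) d
    · rw [hKdef, Set.indicator_of_mem hx, Set.indicator_of_mem hx, ← enorm_eq_nnnorm, ← ofReal_norm]
      apply ENNReal.ofReal_le_ofReal
      rw [norm_mul, Complex.norm_cpow_eq_rpow_re_of_pos hx.1]
      have h1 : (α + γ - 1).re = σ - 1 := by
        rw [hσdef]; simp [Complex.sub_re, Complex.add_re]
      rw [h1, mul_comm M]
      exact mul_le_mul_of_nonneg_left (hM _ (hmemball x hx)) (Real.rpow_nonneg hx.1.le _)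
    · rw [hKzero x hx]; simp
  -- weights
  set w : ℕ → ℝ → ℝ≥0∞ := fun jj t => ENNReal.ofReal (Real.exp (-(jj:ℝ) * t)) with hwdef
  have hwm : ∀ jj, Measurable (w jj) := by
    intro jj
    exact ENNReal.measurable_ofReal.comp
      (Real.continuous_exp.comp (continuous_const.mul continuous_id)).measurable
  have hwne : ∀ jj t, w jj t ≠ 0 := by
    intro jj t; rw [hwdef]; simp [ENNReal.ofReal_eq_zero, not_le, Real.exp_pos]
  have hwnt : ∀ jj t, w jj t ≠ ⊤ := fun jj t => ENNReal.ofReal_ne_top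
  -- the weighted kernel integrals
  set If : ℕ → ℝ≥0∞ := fun jj => ∫⁻ s, w jj s * ‖K s‖₊ ∂volume with hIfdef
  have hwK : ∀ jj (s : ℝ), w jj s * (‖K s‖₊ : ℝ≥0∞) ≤ (‖K s‖₊ : ℝ≥0∞) := by
    intro jj s
    by_cases hs : s ∈ Set.Ioc (0:ℝ) d
    · calc w jj s * (‖K s‖₊ : ℝ≥0∞) ≤ 1 * ‖K s‖₊ := by
            apply mul_le_mul_left
            rw [hwdef]
            refine ENNReal.ofReal_le_one.mpr (Real.exp_le_one_iff.mpr ?_)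
            have : (0:ℝ) ≤ (jj:ℝ) := Nat.cast_nonneg jj
            nlinarith [hs.1]
        _ = _ := one_mul _
    · rw [hKzero s hs]; simp
  have hnkfin : ∫⁻ s, (‖K s‖₊ : ℝ≥0∞) ∂volume < ⊤ := by
    have hint : IntegrableOn (fun s : ℝ => s ^ (σ - 1)) (Set.Ioc 0 d) := by
      refine (intervalIntegrable_iff_integrableOn_Ioc_of_le hd.le).mp ?_
      exact intervalIntegral.intervalIntegrable_rpow' (by linarith)
    calc ∫⁻ s, (‖K s‖₊ : ℝ≥0∞) ∂volume
        ≤ ∫⁻ s, (Set.Ioc (0:ℝ) d).indicator (fun x => ENNReal.ofReal (M * x ^ (σ - 1))) s ∂volume :=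
          lintegral_mono hKb
      _ = ∫⁻ s in Set.Ioc 0 d, ENNReal.ofReal (M * s ^ (σ - 1)) ∂volume :=
          lintegral_indicator measurableSet_Ioc _
      _ ≤ ∫⁻ s in Set.Ioc 0 d, (‖M * s ^ (σ - 1)‖₊ : ℝ≥0∞) ∂volume := by
          apply lintegral_mono; intro s; exact Real.ofReal_le_enorm _
      _ < ⊤ := (hint.const_mul M).2
  have hIffin : ∀ jj, If jj < ⊤ := by
    intro jj
    refine lt_of_le_of_lt ?_ hnkfin
    exact lintegral_mono fun s => hwK jj s
  -- choose the weight parameter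
  have hlim : Filter.Tendsto (fun jj : ℕ => ENNReal.ofReal C * If jj) Filter.atTop (nhds 0) := by
    have h0 : Filter.Tendsto If Filter.atTop (nhds 0) := by
      have hdom := tendsto_lintegral_of_dominated_convergence (μ := volume)
        (F := fun jj (s : ℝ) => w jj s * ‖K s‖₊) (f := fun _ => 0)
        (bound := fun s => (‖K s‖₊ : ℝ≥0∞))
        (fun jj => (hwm jj).mul hKmeas.nnnorm.coe_nnreal_ennreal)
        (fun jj => Filter.Eventually.of_forall (hwK jj))
        hnkfin.ne
        (Filter.Eventually.of_forall ?_)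
      · rw [lintegral_zero] at hdom
        exact hdom
      · intro s
        by_cases hs : s ∈ Set.Ioc (0:ℝ) d
        · have h1 : ∀ jj : ℕ, w jj s = ENNReal.ofReal (Real.exp (-s) ^ jj) := by
            intro jj; rw [hwdef]; dsimp only; rw [← Real.exp_nat_mul]; congr 1; ring
          have h2 : Filter.Tendsto (fun jj : ℕ => Real.exp (-s) ^ jj) Filter.atTop (nhds 0) :=
            tendsto_pow_atTop_nhds_zero_of_lt_one (Real.exp_nonneg _)
              (Real.exp_lt_one_iff.mpr (by linarith [hs.1]))
          have h3 := ENNReal.tendsto_ofReal h2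
          rw [ENNReal.ofReal_zero] at h3
          have h4 : Filter.Tendsto (fun jj : ℕ => w jj s) Filter.atTop (nhds 0) := by
            simp_rw [h1]; exact h3
          have h5 := ENNReal.Tendsto.mul_const h4 (Or.inr (ENNReal.coe_ne_top (r := ‖K s‖₊)))
          rw [zero_mul] at h5
          exact h5
        · have : ∀ jj : ℕ, w jj s * (‖K s‖₊ : ℝ≥0∞) = 0 := by
            intro jj; rw [hKzero s hs]; simp
          simp_rw [this]
          exact tendsto_const_nhds
    have h6 := ENNReal.Tendsto.const_mul (a := ENNReal.ofReal C) h0 (Or.inr ENNReal.ofReal_ne_top)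
    rw [mul_zero] at h6
    exact h6
  obtain ⟨j, hκ1⟩ : ∃ jj : ℕ, ENNReal.ofReal C * If jj < 1 := by
    exact ((hlim.eventually_lt_const (by norm_num : (0:ℝ≥0∞) < 1))).exists
  set κ : ℝ≥0∞ := ENNReal.ofReal C * If j with hκdef
  have hκt : κ ≠ ⊤ := ENNReal.mul_ne_top ENNReal.ofReal_ne_top (hIffin j).ne
  -- the core Tonelli estimate
  have hSmeas : MeasurableSet {q : ℝ × ℝ | a < q.2 ∧ q.2 ≤ q.1} :=
    (measurableSet_lt measurable_const measurable_snd).inter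
      (measurableSet_le measurable_snd measurable_fst)
  have CORE : ∀ φ : ℝ → ℝ≥0∞, Measurable φ → (∀ τ, φ τ ≠ ⊤) →
      ∫⁻ t in Set.Icc a b, w j t * ∫⁻ τ in Set.Ioc a t, (‖K (t - τ)‖₊ : ℝ≥0∞) * φ τ ≤
        If j * ∫⁻ τ in Set.Icc a b, w j τ * φ τ := by
    intro φ hφ hφt
    have hFm : Measurable (fun p : ℝ × ℝ => w j p.1 *
        ({q : ℝ × ℝ | a < q.2 ∧ q.2 ≤ q.1}.indicator
          (fun q => (‖K (q.1 - q.2)‖₊ : ℝ≥0∞) * φ q.2) p)) := by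
      refine ((hwm j).comp measurable_fst).mul ?_
      exact Measurable.indicator
        (((hKmeas.comp (measurable_fst.sub measurable_snd)).nnnorm.coe_nnreal_ennreal).mul
          (hφ.comp measurable_snd)) hSmeas
    have hstep1 : ∀ t, t ∈ Set.Icc a b →
        w j t * ∫⁻ τ in Set.Ioc a t, (‖K (t - τ)‖₊ : ℝ≥0∞) * φ τ
          = ∫⁻ τ in Set.Icc a b, w j t *
              ({q : ℝ × ℝ | a < q.2 ∧ q.2 ≤ q.1}.indicator
                (fun q => (‖K (q.1 - q.2)‖₊ : ℝ≥0∞) * φ q.2) (t, τ)) := by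
      intro t ht
      have hsub : Set.Ioc a t ⊆ Set.Icc a b := fun τ hτ => ⟨hτ.1.le, hτ.2.trans ht.2⟩
      rw [← lintegral_const_mul' _ _ (hwnt j t)]
      have he : ∫⁻ τ in Set.Icc a b, w j t * ({q : ℝ × ℝ | a < q.2 ∧ q.2 ≤ q.1}.indicator
                (fun q => (‖K (q.1 - q.2)‖₊ : ℝ≥0∞) * φ q.2) (t, τ))
           = ∫⁻ τ in Set.Icc a b, (Set.Ioc a t).indicator
                (fun τ => w j t * ((‖K (t - τ)‖₊ : ℝ≥0∞) * φ τ)) τ := by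
        apply lintegral_congr
        intro τ
        by_cases hτ : τ ∈ Set.Ioc a t
        · rw [Set.indicator_of_mem
            (show (t, τ) ∈ {q : ℝ × ℝ | a < q.2 ∧ q.2 ≤ q.1} from ⟨hτ.1, hτ.2⟩),
            Set.indicator_of_mem hτ]
        · rw [Set.indicator_of_notMem
            (show (t, τ) ∉ {q : ℝ × ℝ | a < q.2 ∧ q.2 ≤ q.1} from fun hc => hτ ⟨hc.1, hc.2⟩),
            Set.indicator_of_notMem hτ, mul_zero]
      rw [he, lintegral_indicator measurableSet_Ioc,
        Measure.restrict_restrict measurableSet_Ioc, Set.inter_eq_left.mpr hsub]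
    calc ∫⁻ t in Set.Icc a b, w j t * ∫⁻ τ in Set.Ioc a t, (‖K (t - τ)‖₊ : ℝ≥0∞) * φ τ
        = ∫⁻ t in Set.Icc a b, ∫⁻ τ in Set.Icc a b, w j t *
            ({q : ℝ × ℝ | a < q.2 ∧ q.2 ≤ q.1}.indicator
              (fun q => (‖K (q.1 - q.2)‖₊ : ℝ≥0∞) * φ q.2) (t, τ)) := by
          apply lintegral_congr_ae
          filter_upwards [ae_restrict_mem measurableSet_Icc] with t ht
          exact hstep1 t ht
      _ = ∫⁻ τ in Set.Icc a b, ∫⁻ t in Set.Icc a b, w j t *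
            ({q : ℝ × ℝ | a < q.2 ∧ q.2 ≤ q.1}.indicator
              (fun q => (‖K (q.1 - q.2)‖₊ : ℝ≥0∞) * φ q.2) (t, τ)) :=
          lintegral_lintegral_swap hFm.aemeasurable
      _ ≤ ∫⁻ τ in Set.Icc a b, (w j τ * φ τ) * If j := by
          apply lintegral_mono
          intro τ
          calc ∫⁻ t in Set.Icc a b, w j t *
                ({q : ℝ × ℝ | a < q.2 ∧ q.2 ≤ q.1}.indicator
                  (fun q => (‖K (q.1 - q.2)‖₊ : ℝ≥0∞) * φ q.2) (t, τ))
              ≤ ∫⁻ t in Set.Icc a b, (φ τ * w j τ) * (w j (t - τ) * ‖K (t - τ)‖₊) := by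
                apply lintegral_mono
                intro t
                dsimp only
                by_cases hτ' : a < τ ∧ τ ≤ t
                · rw [Set.indicator_of_mem
                    (show (t, τ) ∈ {q : ℝ × ℝ | a < q.2 ∧ q.2 ≤ q.1} from hτ')]
                  have hw : w j t = w j τ * w j (t - τ) := by
                    rw [hwdef]; dsimp only
                    rw [← ENNReal.ofReal_mul (Real.exp_nonneg _), ← Real.exp_add]
                    congr 1; ring
                  rw [hw]
                  apply le_of_eq; ring
                · rw [Set.indicator_of_notMem
                    (show (t, τ) ∉ {q : ℝ × ℝ | a < q.2 ∧ q.2 ≤ q.1} from hτ'), mul_zero]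
                  exact zero_le
            _ ≤ ∫⁻ t, (φ τ * w j τ) * (w j (t - τ) * ‖K (t - τ)‖₊) ∂volume :=
                lintegral_mono' Measure.restrict_le_self le_rfl
            _ = (φ τ * w j τ) * ∫⁻ t, w j (t - τ) * ‖K (t - τ)‖₊ ∂volume :=
                lintegral_const_mul' _ _ (ENNReal.mul_ne_top (hφt τ) (hwnt j τ))
            _ = (φ τ * w j τ) * If j := by
                congr 1
                rw [hIfdef]
                have h2 := lintegral_add_right_eq_self (μ := volume) (fun s => w j s * (‖K s‖₊ : ℝ≥0∞)) (-τ)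
                calc ∫⁻ t, w j (t - τ) * ‖K (t - τ)‖₊ ∂volume
                    = ∫⁻ t, (fun s => w j s * (‖K s‖₊ : ℝ≥0∞)) (t + -τ) ∂volume := by
                      apply lintegral_congr; intro t; rw [sub_eq_add_neg]
                  _ = _ := h2
            _ = (w j τ * φ τ) * If j := by ring
      _ = If j * ∫⁻ τ in Set.Icc a b, w j τ * φ τ := by
          rw [lintegral_mul_const' _ _ (hIffin j).ne, mul_comm]
  -- relating genInt to the kernel form
  set Vint : (ℝ → ℂ) → ℝ → ℂ := fun h t => ∫ τ in Set.Ioc a t, K (t - τ) * h τ with hVdef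
  have hgen : ∀ (h : ℝ → ℂ) (t : ℝ), t ∈ Set.Icc a b →
      genInt a (α + γ) β A h t = Vint h t := by
    intro h t ht
    unfold genInt
    simp only [hVdef]
    rw [intervalIntegral.integral_of_le ht.1]
    apply setIntegral_congr_ae measurableSet_Ioc
    have hne : ∀ᵐ τ : ℝ, τ ≠ t := by
      rw [ae_iff]
      have he : {τ : ℝ | ¬τ ≠ t} = {t} := by ext τ; simp
      rw [he]
      exact measure_singleton t
    filter_upwards [hne] with τ hτ hmem
    have hx : t - τ ∈ Set.Ioc (0:ℝ) d := by
      constructor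
      · have := lt_of_le_of_ne hmem.2 hτ; linarith
      · have h1 := hmem.1; have h2 := ht.2; rw [hddef]; linarith
    rw [hKdef, Set.indicator_of_mem hx]
  have hVcongr : ∀ h h' : ℝ → ℂ, h =ᵐ[μ] h' → ∀ t ∈ Set.Icc a b, Vint h t = Vint h' t := by
    intro h h' he t ht
    apply integral_congr_ae
    have hsub : Set.Ioc a t ⊆ Set.Icc a b := fun τ hτ => ⟨hτ.1.le, hτ.2.trans ht.2⟩
    have := he.filter_mono (ae_mono (Measure.restrict_mono hsub le_rfl))
    filter_upwards [this] with τ hτ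
    rw [hτ]
  have hVsm : ∀ h : ℝ → ℂ, Measurable h → StronglyMeasurable (Vint h) := by
    intro h hh
    have hFsm : StronglyMeasurable (fun p : ℝ × ℝ =>
        ({q : ℝ × ℝ | a < q.2 ∧ q.2 ≤ q.1}.indicator (fun q => K (q.1 - q.2) * h q.2) p)) := by
      apply Measurable.stronglyMeasurable
      exact Measurable.indicator
        ((hKmeas.comp (measurable_fst.sub measurable_snd)).mul (hh.comp measurable_snd)) hSmeas
    have hint := hFsm.integral_prod_right' (ν := volume)
    have heq : Vint h = fun t => ∫ τ,
        ({q : ℝ × ℝ | a < q.2 ∧ q.2 ≤ q.1}.indicator (fun q => K (q.1 - q.2) * h q.2)) (t, τ) ∂volume := by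
      funext t
      simp only [hVdef]
      rw [← integral_indicator measurableSet_Ioc]
      rfl
    rw [heq]
    exact hint
  have hΦmeas : ∀ h : ℝ → ℂ, Measurable h →
      Measurable (fun t => ∫⁻ τ in Set.Ioc a t, (‖K (t - τ)‖₊ : ℝ≥0∞) * ‖h τ‖₊) := by
    intro h hh
    have hFm : Measurable (fun p : ℝ × ℝ =>
        ({q : ℝ × ℝ | a < q.2 ∧ q.2 ≤ q.1}.indicator
          (fun q => (‖K (q.1 - q.2)‖₊ : ℝ≥0∞) * ‖h q.2‖₊) p)) := by
      exact Measurable.indicator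
        (((hKmeas.comp (measurable_fst.sub measurable_snd)).nnnorm.coe_nnreal_ennreal).mul
          ((hh.comp measurable_snd).nnnorm.coe_nnreal_ennreal)) hSmeas
    have hint := hFm.lintegral_prod_right' (ν := volume)
    have heq : (fun t => ∫⁻ τ in Set.Ioc a t, (‖K (t - τ)‖₊ : ℝ≥0∞) * ‖h τ‖₊) = fun t => ∫⁻ τ,
        ({q : ℝ × ℝ | a < q.2 ∧ q.2 ≤ q.1}.indicator
          (fun q => (‖K (q.1 - q.2)‖₊ : ℝ≥0∞) * ‖h q.2‖₊)) (t, τ) ∂volume := by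
      funext t
      rw [← lintegral_indicator measurableSet_Ioc]
      rfl
    rw [heq]
    exact hint
  -- measurable representatives
  have hrep : ∀ g : ℝ → ℂ, IntegrableOn g (Set.Icc a b) →
      ∃ g' : ℝ → ℂ, Measurable g' ∧ g' =ᵐ[μ] g := by
    intro g hg
    have hh := hg.aestronglyMeasurable.aemeasurable
    exact ⟨hh.mk g, hh.measurable_mk, hh.ae_eq_mk.symm⟩
  -- the weighted norm
  set NN : (ℝ → ℂ) → ℝ≥0∞ := fun g => ∫⁻ t in Set.Icc a b, w j t * ‖g t‖₊ with hNNdef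
  have hNN_le : ∀ g : ℝ → ℂ, NN g ≤
      ENNReal.ofReal (Real.exp (-(j:ℝ) * a)) * ∫⁻ t in Set.Icc a b, (‖g t‖₊ : ℝ≥0∞) := by
    intro g
    rw [hNNdef, ← lintegral_const_mul' _ _ ENNReal.ofReal_ne_top]
    apply lintegral_mono_ae
    filter_upwards [ae_restrict_mem measurableSet_Icc] with t ht
    apply mul_le_mul_left
    rw [hwdef]
    apply ENNReal.ofReal_le_ofReal
    apply Real.exp_le_exp.mpr
    have : (0:ℝ) ≤ (j:ℝ) := Nat.cast_nonneg j
    nlinarith [ht.1]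
  have hNN_ge : ∀ g : ℝ → ℂ, ∫⁻ t in Set.Icc a b, (‖g t‖₊ : ℝ≥0∞) ≤
      ENNReal.ofReal (Real.exp ((j:ℝ) * b)) * NN g := by
    intro g
    rw [hNNdef, ← lintegral_const_mul' _ _ ENNReal.ofReal_ne_top]
    apply lintegral_mono_ae
    filter_upwards [ae_restrict_mem measurableSet_Icc] with t ht
    calc (‖g t‖₊ : ℝ≥0∞) = 1 * ‖g t‖₊ := (one_mul _).symm
      _ ≤ (ENNReal.ofReal (Real.exp ((j:ℝ) * b)) * w j t) * ‖g t‖₊ := by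
          apply mul_le_mul_left
          rw [hwdef, ← ENNReal.ofReal_mul (Real.exp_nonneg _), ← Real.exp_add]
          refine le_trans ?_ le_rfl
          rw [show (1:ℝ≥0∞) = ENNReal.ofReal (Real.exp 0) by simp]
          apply ENNReal.ofReal_le_ofReal
          apply Real.exp_le_exp.mpr
          have : (0:ℝ) ≤ (j:ℝ) := Nat.cast_nonneg j
          nlinarith [ht.2]
      _ = _ := by ring
  have hNNfin : ∀ g : ℝ → ℂ, IntegrableOn g (Set.Icc a b) → NN g < ⊤ := by
    intro g hg
    refine lt_of_le_of_lt (hNN_le g) (ENNReal.mul_lt_top ENNReal.ofReal_lt_top ?_)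
    exact hg.2
  have hNNzero : ∀ g : ℝ → ℂ, AEStronglyMeasurable g μ → NN g = 0 → g =ᵐ[μ] 0 := by
    intro g hg h0
    have hm : AEMeasurable (fun t => w j t * (‖g t‖₊ : ℝ≥0∞)) μ := ((hwm j).aemeasurable).mul hg.aemeasurable.nnnorm.coe_nnreal_ennreal
    have h1 := (lintegral_eq_zero_iff' hm).mp h0
    filter_upwards [h1] with t ht
    rcases mul_eq_zero.mp ht with h | h
    · exact absurd h (hwne j t)
    · simpa using h
  have hNNcongr : ∀ g g' : ℝ → ℂ, g =ᵐ[μ] g' → NN g = NN g' := by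
    intro g g' hgg
    apply lintegral_congr_ae
    filter_upwards [hgg] with t ht
    rw [ht]
  -- L¹ bound for Vint
  have hTL : ∀ h' : ℝ → ℂ, Measurable h' → NN (Vint h') ≤ If j * NN h' := by
    intro h' hm
    calc NN (Vint h') ≤ ∫⁻ t in Set.Icc a b, w j t *
          ∫⁻ τ in Set.Ioc a t, (‖K (t - τ)‖₊ : ℝ≥0∞) * ‖h' τ‖₊ := by
          rw [hNNdef]
          apply lintegral_mono; intro t
          apply mul_le_mul_right
          calc (‖Vint h' t‖₊ : ℝ≥0∞) ≤ ∫⁻ τ in Set.Ioc a t, ‖K (t - τ) * h' τ‖₊ :=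
                enorm_integral_le_lintegral_enorm _
            _ = _ := by simp_rw [nnnorm_mul, ENNReal.coe_mul]
      _ ≤ If j * NN h' := CORE _ hm.nnnorm.coe_nnreal_ennreal (fun τ => ENNReal.coe_ne_top)
  -- almost-everywhere integrability of the convolution integrand
  have hAE : ∀ h' : ℝ → ℂ, Measurable h' → (∫⁻ τ in Set.Icc a b, (‖h' τ‖₊ : ℝ≥0∞)) < ⊤ →
      ∀ᵐ t ∂μ, IntegrableOn (fun τ => K (t - τ) * h' τ) (Set.Ioc a t) := by
    intro h' hm hfin
    have hΦm := hΦmeas h' hm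
    have hNNh : NN h' < ⊤ :=
      lt_of_le_of_lt (hNN_le h') (ENNReal.mul_lt_top ENNReal.ofReal_lt_top hfin)
    have hcore := CORE (fun τ => (‖h' τ‖₊ : ℝ≥0∞)) hm.nnnorm.coe_nnreal_ennreal (fun τ => ENNReal.coe_ne_top)
    have hfin2 : ∫⁻ t in Set.Icc a b,
        w j t * ∫⁻ τ in Set.Ioc a t, (‖K (t - τ)‖₊ : ℝ≥0∞) * ‖h' τ‖₊ ≠ ⊤ :=
      (lt_of_le_of_lt hcore (ENNReal.mul_lt_top (hIffin j) hNNh)).ne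
    have hae1 := ae_lt_top' (((hwm j).mul hΦm).aemeasurable) hfin2
    filter_upwards [hae1] with t ht
    have hΦfin : (∫⁻ τ in Set.Ioc a t, (‖K (t - τ)‖₊ : ℝ≥0∞) * ‖h' τ‖₊) < ⊤ := by
      by_contra hc
      rw [not_lt, top_le_iff] at hc
      simp only [Pi.mul_apply] at ht
      rw [hc, ENNReal.mul_top (hwne j t)] at ht
      exact lt_irrefl _ ht
    constructor
    · exact ((hKmeas.comp (measurable_const.sub measurable_id)).mul hm).aestronglyMeasurable
    · show (∫⁻ τ in Set.Ioc a t, (‖K (t - τ) * h' τ‖₊ : ℝ≥0∞)) < ⊤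
      calc ∫⁻ τ in Set.Ioc a t, (‖K (t - τ) * h' τ‖₊ : ℝ≥0∞)
          = ∫⁻ τ in Set.Ioc a t, (‖K (t - τ)‖₊ : ℝ≥0∞) * ‖h' τ‖₊ := by
            apply lintegral_congr; intro τ; rw [nnnorm_mul, ENNReal.coe_mul]
        _ < ⊤ := hΦfin
  -- the Picard operator
  set Tmap : (ℝ → ℂ) → ℝ → ℂ :=
    fun g t => u₀ t + genInt a (α + γ) β A (fun s => f s (g s)) t with hTdef
  have hTint : ∀ g : ℝ → ℂ, IntegrableOn g (Set.Icc a b) → IntegrableOn (Tmap g) (Set.Icc a b) := by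
    intro g hg
    obtain ⟨h', hm', he'⟩ := hrep (fun s => f s (g s)) (hmeas g hg)
    have hInth' : IntegrableOn h' (Set.Icc a b) := (hmeas g hg).congr he'.symm
    have hVfin : NN (Vint h') < ⊤ :=
      lt_of_le_of_lt (hTL h' hm') (ENNReal.mul_lt_top (hIffin j) (hNNfin h' hInth'))
    have hVL1 : IntegrableOn (Vint h') (Set.Icc a b) := by
      constructor
      · exact (hVsm h' hm').aestronglyMeasurable.restrict
      · show (∫⁻ t in Set.Icc a b, (‖Vint h' t‖₊ : ℝ≥0∞)) < ⊤
        exact lt_of_le_of_lt (hNN_ge (Vint h')) (ENNReal.mul_lt_top ENNReal.ofReal_lt_top hVfin)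
    have heq : ∀ᵐ t ∂μ, (fun t => u₀ t + Vint h' t) t = Tmap g t := by
      filter_upwards [ae_restrict_mem measurableSet_Icc] with t ht
      rw [hTdef]
      dsimp only
      rw [hgen _ t ht, hVcongr _ h' he'.symm t ht]
    exact (hu₀L1.add hVL1).congr heq
  have hTcontr : ∀ g₁ g₂ : ℝ → ℂ, IntegrableOn g₁ (Set.Icc a b) → IntegrableOn g₂ (Set.Icc a b) →
      NN (fun t => Tmap g₁ t - Tmap g₂ t) ≤ κ * NN (fun t => g₁ t - g₂ t) := by
    intro g₁ g₂ hg₁ hg₂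
    obtain ⟨g₁', hg₁m, hg₁e⟩ := hrep g₁ hg₁
    obtain ⟨g₂', hg₂m, hg₂e⟩ := hrep g₂ hg₂
    obtain ⟨h₁', hh₁m, hh₁e⟩ := hrep (fun s => f s (g₁ s)) (hmeas g₁ hg₁)
    obtain ⟨h₂', hh₂m, hh₂e⟩ := hrep (fun s => f s (g₂ s)) (hmeas g₂ hg₂)
    have hfin₁ : ∫⁻ τ in Set.Icc a b, (‖h₁' τ‖₊ : ℝ≥0∞) < ⊤ := by
      have he : ∫⁻ τ in Set.Icc a b, (‖h₁' τ‖₊ : ℝ≥0∞)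
          = ∫⁻ τ in Set.Icc a b, (‖f τ (g₁ τ)‖₊ : ℝ≥0∞) := by
        apply lintegral_congr_ae; filter_upwards [hh₁e] with τ hτ; rw [hτ]
      rw [he]; exact (hmeas g₁ hg₁).2
    have hfin₂ : ∫⁻ τ in Set.Icc a b, (‖h₂' τ‖₊ : ℝ≥0∞) < ⊤ := by
      have he : ∫⁻ τ in Set.Icc a b, (‖h₂' τ‖₊ : ℝ≥0∞)
          = ∫⁻ τ in Set.Icc a b, (‖f τ (g₂ τ)‖₊ : ℝ≥0∞) := by
        apply lintegral_congr_ae; filter_upwards [hh₂e] with τ hτ; rw [hτ]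
      rw [he]; exact (hmeas g₂ hg₂).2
    have hae₁ := hAE h₁' hh₁m hfin₁
    have hae₂ := hAE h₂' hh₂m hfin₂
    have hφm : Measurable (fun τ => ENNReal.ofReal C * (‖g₁' τ - g₂' τ‖₊ : ℝ≥0∞)) :=
      measurable_const.mul ((hg₁m.sub hg₂m).nnnorm.coe_nnreal_ennreal)
    have hpt : ∀ᵐ t ∂μ, (‖Tmap g₁ t - Tmap g₂ t‖₊ : ℝ≥0∞) ≤
        ∫⁻ τ in Set.Ioc a t, (‖K (t - τ)‖₊ : ℝ≥0∞) * (ENNReal.ofReal C * ‖g₁' τ - g₂' τ‖₊) := by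
      filter_upwards [hae₁, hae₂, ae_restrict_mem measurableSet_Icc] with t ha₁ ha₂ ht
      have hsub : Set.Ioc a t ⊆ Set.Icc a b := fun τ hτ => ⟨hτ.1.le, hτ.2.trans ht.2⟩
      have e1 : Tmap g₁ t - Tmap g₂ t = Vint h₁' t - Vint h₂' t := by
        rw [hTdef]
        dsimp only
        rw [hgen _ t ht, hgen _ t ht, hVcongr _ h₁' hh₁e.symm t ht, hVcongr _ h₂' hh₂e.symm t ht]
        ring
      have e2 : Vint h₁' t - Vint h₂' t = ∫ τ in Set.Ioc a t, K (t - τ) * (h₁' τ - h₂' τ) := by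
        simp only [hVdef]
        rw [← integral_sub ha₁ ha₂]
        exact integral_congr_ae (Filter.Eventually.of_forall fun τ => (mul_sub _ _ _).symm)
      rw [e1, e2]
      calc (‖∫ τ in Set.Ioc a t, K (t - τ) * (h₁' τ - h₂' τ)‖₊ : ℝ≥0∞)
          ≤ ∫⁻ τ in Set.Ioc a t, ‖K (t - τ) * (h₁' τ - h₂' τ)‖₊ :=
            enorm_integral_le_lintegral_enorm _
        _ = ∫⁻ τ in Set.Ioc a t, (‖K (t - τ)‖₊ : ℝ≥0∞) * ‖h₁' τ - h₂' τ‖₊ := by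
            apply lintegral_congr; intro τ; rw [nnnorm_mul, ENNReal.coe_mul]
        _ ≤ _ := by
            apply lintegral_mono_ae
            have hm1 := hh₁e.filter_mono (ae_mono (Measure.restrict_mono hsub le_rfl))
            have hm2 := hh₂e.filter_mono (ae_mono (Measure.restrict_mono hsub le_rfl))
            have hm3 := hg₁e.filter_mono (ae_mono (Measure.restrict_mono hsub le_rfl))
            have hm4 := hg₂e.filter_mono (ae_mono (Measure.restrict_mono hsub le_rfl))
            filter_upwards [hm1, hm2, hm3, hm4] with τ e₁ e₂ e₃ e₄
            apply mul_le_mul_right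
            rw [e₁, e₂, e₃, e₄]
            calc (‖f τ (g₁ τ) - f τ (g₂ τ)‖₊ : ℝ≥0∞)
                = ENNReal.ofReal ‖f τ (g₁ τ) - f τ (g₂ τ)‖ := (ofReal_norm _).symm
              _ ≤ ENNReal.ofReal (C * ‖g₁ τ - g₂ τ‖) := ENNReal.ofReal_le_ofReal (hLip τ _ _)
              _ = ENNReal.ofReal C * ENNReal.ofReal ‖g₁ τ - g₂ τ‖ := ENNReal.ofReal_mul hC
              _ = ENNReal.ofReal C * (‖g₁ τ - g₂ τ‖₊ : ℝ≥0∞) := by rw [ofReal_norm, enorm_eq_nnnorm]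
    calc NN (fun t => Tmap g₁ t - Tmap g₂ t)
        ≤ ∫⁻ t in Set.Icc a b, w j t * ∫⁻ τ in Set.Ioc a t,
            (‖K (t - τ)‖₊ : ℝ≥0∞) * (ENNReal.ofReal C * ‖g₁' τ - g₂' τ‖₊) := by
          simp only [hNNdef]
          apply lintegral_mono_ae
          filter_upwards [hpt] with t ht'
          exact mul_le_mul_right ht' _
      _ ≤ If j * ∫⁻ τ in Set.Icc a b, w j τ * (ENNReal.ofReal C * ‖g₁' τ - g₂' τ‖₊) :=
          CORE _ hφm (fun τ => ENNReal.mul_ne_top ENNReal.ofReal_ne_top ENNReal.coe_ne_top)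
      _ = κ * NN (fun t => g₁ t - g₂ t) := by
          have he1 : ∫⁻ τ in Set.Icc a b, w j τ * (ENNReal.ofReal C * ‖g₁' τ - g₂' τ‖₊)
              = ENNReal.ofReal C * ∫⁻ τ in Set.Icc a b, w j τ * ‖g₁' τ - g₂' τ‖₊ := by
            rw [← lintegral_const_mul' _ _ ENNReal.ofReal_ne_top]
            apply lintegral_congr; intro τ; ring
          have he2 : ∫⁻ τ in Set.Icc a b, w j τ * (‖g₁' τ - g₂' τ‖₊ : ℝ≥0∞)
              = ∫⁻ τ in Set.Icc a b, w j τ * ‖g₁ τ - g₂ τ‖₊ := by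
            apply lintegral_congr_ae
            filter_upwards [hg₁e, hg₂e] with τ e₃ e₄
            rw [e₃, e₄]
          rw [he1, he2, hκdef]
          simp only [hNNdef]
          ring
  -- Picard iteration
  set gs : ℕ → ℝ → ℂ := fun m => Nat.rec u₀ (fun _ g => Tmap g) m with hgsdef
  have hgsS : ∀ m, gs (m + 1) = Tmap (gs m) := fun m => rfl
  have hgsInt : ∀ m, IntegrableOn (gs m) (Set.Icc a b) := by
    intro m
    induction m with
    | zero => exact hu₀L1
    | succ m ih => rw [hgsS]; exact hTint _ ih
  have hDgeom : ∀ m, NN (fun t => gs (m + 1) t - gs m t) ≤ κ ^ m * NN (fun t => gs 1 t - gs 0 t) := by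
    intro m
    induction m with
    | zero => simp
    | succ m ih =>
      calc NN (fun t => gs (m + 1 + 1) t - gs (m + 1) t)
          = NN (fun t => Tmap (Tmap (gs m)) t - Tmap (gs m) t) := by rw [hgsS (m + 1), hgsS m]
        _ ≤ κ * NN (fun t => Tmap (gs m) t - gs m t) := hTcontr _ _ (hTint _ (hgsInt m)) (hgsInt m)
        _ = κ * NN (fun t => gs (m + 1) t - gs m t) := by rw [← hgsS m]
        _ ≤ κ * (κ ^ m * NN (fun t => gs 1 t - gs 0 t)) := mul_le_mul_right ih _
        _ = κ ^ (m + 1) * NN (fun t => gs 1 t - gs 0 t) := by ring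
  have hD0fin : NN (fun t => gs 1 t - gs 0 t) < ⊤ := by
    refine hNNfin _ ?_
    exact (hgsInt 1).sub (hgsInt 0)
  -- pass to L¹ and take the limit
  haveI : Fact ((1:ℝ≥0∞) ≤ 1) := ⟨le_rfl⟩
  have hmem : ∀ m, MemLp (gs m) 1 μ := fun m => memLp_one_iff_integrable.mpr (hgsInt m)
  set Fs : ℕ → Lp ℂ 1 μ := fun m => (hmem m).toLp (gs m) with hFsdef
  have hFse : ∀ m, ⇑(Fs m) =ᵐ[μ] gs m := fun m => (hmem m).coeFn_toLp
  have hκr : κ.toReal < 1 := by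
    have h2 := (ENNReal.toReal_lt_toReal hκt ENNReal.one_ne_top).mpr hκ1
    simpa using h2
  have hcauchy : CauchySeq Fs := by
    set c1 : ℝ≥0∞ := ENNReal.ofReal (Real.exp ((j:ℝ) * b)) * NN (fun t => gs 1 t - gs 0 t)
      with hc1def
    have hc1t : c1 ≠ ⊤ := ENNReal.mul_ne_top ENNReal.ofReal_ne_top hD0fin.ne
    apply cauchySeq_of_le_geometric κ.toReal c1.toReal hκr
    intro m
    rw [Lp.dist_def]
    have he1 : eLpNorm (⇑(Fs m) - ⇑(Fs (m+1))) 1 μ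
        = ∫⁻ t in Set.Icc a b, (‖gs (m+1) t - gs m t‖₊ : ℝ≥0∞) := by
      rw [eLpNorm_congr_ae (g := fun t => gs m t - gs (m+1) t) ?_]
      · rw [eLpNorm_one_eq_lintegral_enorm]
        apply lintegral_congr; intro t
        rw [← neg_sub, enorm_neg]; rfl
      · filter_upwards [hFse m, hFse (m+1)] with t h1 h2
        simp only [Pi.sub_apply, h1, h2]
    have hle : eLpNorm (⇑(Fs m) - ⇑(Fs (m+1))) 1 μ ≤ c1 * κ ^ m := by
      rw [he1]
      calc ∫⁻ t in Set.Icc a b, (‖gs (m+1) t - gs m t‖₊ : ℝ≥0∞)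
          ≤ ENNReal.ofReal (Real.exp ((j:ℝ) * b)) * NN (fun t => gs (m+1) t - gs m t) := hNN_ge _
        _ ≤ ENNReal.ofReal (Real.exp ((j:ℝ) * b)) * (κ ^ m * NN (fun t => gs 1 t - gs 0 t)) :=
            mul_le_mul_right (hDgeom m) _
        _ = c1 * κ ^ m := by rw [hc1def]; ring
    calc (eLpNorm (⇑(Fs m) - ⇑(Fs (m+1))) 1 μ).toReal ≤ (c1 * κ ^ m).toReal :=
          ENNReal.toReal_mono (ENNReal.mul_ne_top hc1t (ENNReal.pow_ne_top hκt)) hle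
      _ = c1.toReal * κ.toReal ^ m := by rw [ENNReal.toReal_mul, ENNReal.toReal_pow]
  obtain ⟨FL, hFL⟩ := cauchySeq_tendsto_of_complete hcauchy
  set u : ℝ → ℂ := ⇑FL with hudef
  have huInt : IntegrableOn u (Set.Icc a b) := memLp_one_iff_integrable.mp (Lp.memLp FL)
  have hconv : Filter.Tendsto (fun m => ∫⁻ t in Set.Icc a b, (‖gs m t - u t‖₊ : ℝ≥0∞))
      Filter.atTop (nhds 0) := by
    have h1 : ∀ m, ∫⁻ t in Set.Icc a b, (‖gs m t - u t‖₊ : ℝ≥0∞)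
        = ENNReal.ofReal (dist (Fs m) FL) := by
      intro m
      have hae : ⇑(Fs m) - ⇑FL =ᵐ[μ] fun t => gs m t - u t := by
        filter_upwards [hFse m] with t h2
        simp only [Pi.sub_apply, h2, hudef]
      rw [Lp.dist_def, eLpNorm_congr_ae hae, eLpNorm_one_eq_lintegral_enorm,
        ENNReal.ofReal_toReal]
      rfl
      exact ((hgsInt m).sub huInt).2.ne
    have h2 := ENNReal.tendsto_ofReal (tendsto_iff_dist_tendsto_zero.mp hFL)
    rw [ENNReal.ofReal_zero] at h2
    exact h2.congr fun m => (h1 m).symm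
  -- the fixed point property
  have hTu : ∀ᵐ t ∂μ, u t = Tmap u t := by
    have hTuInt := hTint u huInt
    have hkey : NN (fun t => u t - Tmap u t) = 0 := by
      have hble : ∀ m, NN (fun t => u t - Tmap u t) ≤
          ENNReal.ofReal (Real.exp (-(j:ℝ) * a)) *
            (∫⁻ t in Set.Icc a b, (‖gs (m+1) t - u t‖₊ : ℝ≥0∞))
          + κ * (ENNReal.ofReal (Real.exp (-(j:ℝ) * a)) *
            ∫⁻ t in Set.Icc a b, (‖gs m t - u t‖₊ : ℝ≥0∞)) := by
        intro m
        have tri : NN (fun t => u t - Tmap u t) ≤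
            NN (fun t => u t - gs (m+1) t) + NN (fun t => gs (m+1) t - Tmap u t) := by
          simp only [hNNdef]
          calc ∫⁻ t in Set.Icc a b, w j t * (‖u t - Tmap u t‖₊ : ℝ≥0∞)
              ≤ ∫⁻ t in Set.Icc a b,
                  (w j t * ‖u t - gs (m+1) t‖₊ + w j t * ‖gs (m+1) t - Tmap u t‖₊) := by
                apply lintegral_mono
                intro t
                dsimp only
                rw [← mul_add]
                apply mul_le_mul_right
                calc (‖u t - Tmap u t‖₊ : ℝ≥0∞)
                    = ‖(u t - gs (m+1) t) + (gs (m+1) t - Tmap u t)‖₊ := by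
                      rw [sub_add_sub_cancel]
                  _ ≤ (‖u t - gs (m+1) t‖₊ : ℝ≥0∞) + ‖gs (m+1) t - Tmap u t‖₊ := by
                      rw [← ENNReal.coe_add]
                      exact ENNReal.coe_le_coe.mpr (nnnorm_add_le _ _)
            _ = _ := by
                apply lintegral_add_left'
                exact ((hwm j).aemeasurable).mul ((huInt.sub (hgsInt (m+1))).aestronglyMeasurable.aemeasurable.nnnorm.coe_nnreal_ennreal)
        have t1 : NN (fun t => u t - gs (m+1) t) ≤
            ENNReal.ofReal (Real.exp (-(j:ℝ) * a)) *
              ∫⁻ t in Set.Icc a b, (‖gs (m+1) t - u t‖₊ : ℝ≥0∞) := by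
          refine le_trans (hNN_le _) ?_
          apply mul_le_mul_right
          apply lintegral_mono
          intro t
          dsimp only
          exact le_of_eq (by rw [← neg_sub, nnnorm_neg])
        have t2 : NN (fun t => gs (m+1) t - Tmap u t) ≤ κ * NN (fun t => gs m t - u t) := by
          have he : NN (fun t => gs (m+1) t - Tmap u t) = NN (fun t => Tmap (gs m) t - Tmap u t) := by
            rw [hgsS m]
          rw [he]
          exact hTcontr _ _ (hgsInt m) huInt
        have t3 : NN (fun t => gs m t - u t) ≤
            ENNReal.ofReal (Real.exp (-(j:ℝ) * a)) *
              ∫⁻ t in Set.Icc a b, (‖gs m t - u t‖₊ : ℝ≥0∞) := hNN_le _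
        calc NN (fun t => u t - Tmap u t) ≤ _ + _ := tri
          _ ≤ _ := add_le_add t1 (le_trans t2 (mul_le_mul_right t3 κ))
      have hrhs : Filter.Tendsto (fun m =>
          ENNReal.ofReal (Real.exp (-(j:ℝ) * a)) *
            (∫⁻ t in Set.Icc a b, (‖gs (m+1) t - u t‖₊ : ℝ≥0∞))
          + κ * (ENNReal.ofReal (Real.exp (-(j:ℝ) * a)) *
            ∫⁻ t in Set.Icc a b, (‖gs m t - u t‖₊ : ℝ≥0∞))) Filter.atTop (nhds 0) := by
        have c1 := hconv.comp (Filter.tendsto_add_atTop_nat 1)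
        have c2 := ENNReal.Tendsto.const_mul (a := ENNReal.ofReal (Real.exp (-(j:ℝ) * a))) c1 (Or.inr ENNReal.ofReal_ne_top)
        rw [mul_zero] at c2
        have c3 := ENNReal.Tendsto.const_mul (a := κ)
          (ENNReal.Tendsto.const_mul (a := ENNReal.ofReal (Real.exp (-(j:ℝ) * a))) hconv
            (Or.inr ENNReal.ofReal_ne_top)) (Or.inr hκt)
        rw [mul_zero, mul_zero] at c3
        have c4 := c2.add c3
        rw [add_zero] at c4
        exact c4
      have hle0 := ge_of_tendsto hrhs (Filter.Eventually.of_forall hble)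
      exact le_antisymm hle0 zero_le
    have h0 := hNNzero _ ((huInt.sub hTuInt).aestronglyMeasurable) hkey
    filter_upwards [h0] with t ht
    have ht' : u t - Tmap u t = 0 := ht
    exact sub_eq_zero.mp ht'
  refine ⟨u, huInt, ?_, ?_⟩
  · filter_upwards [hTu] with t ht
    rw [ht, hTdef]
  · intro v hvInt hv
    have hvT : ∀ᵐ t ∂μ, v t = Tmap v t := by
      filter_upwards [hv] with t ht
      rw [ht, hTdef]
    have hX : NN (fun t => v t - u t) ≤ κ * NN (fun t => v t - u t) := by
      calc NN (fun t => v t - u t) = NN (fun t => Tmap v t - Tmap u t) := by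
            apply hNNcongr
            filter_upwards [hvT, hTu] with t h1 h2
            rw [h1, h2]
        _ ≤ κ * NN (fun t => v t - u t) := hTcontr _ _ hvInt huInt
    have hXfin : NN (fun t => v t - u t) < ⊤ := hNNfin _ (hvInt.sub huInt)
    have hX0 : NN (fun t => v t - u t) = 0 := by
      by_contra h0
      have := lt_of_le_of_lt hX (ENNReal.mul_lt_mul_left h0 hXfin.ne hκ1)
      rw [one_mul] at this
      exact lt_irrefl _ this
    have := hNNzero _ ((hvInt.sub huInt).aestronglyMeasurable) hX0
    filter_upwards [this] with t ht
    have : v t - u t = 0 := ht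
    linear_combination this
end
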